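/- Let k and n be integers with 2 ≤ k ≤ n and let r > 0 be a real number. Then the stationary probability that worker 1 is blocked satisfies B(k, n, r) = (Σ_{(X,B) : 1 ∈ B} r^{|B|}) / (Σ_{(X,B)} r^{|B|}) = (Σ_{b=0}^{k−2} C(k−1, b) · C(n−b−2, k−b−2) · r^{b+1}) / (Σ_{b=0}^{k−1} C(k, b) · C(n−b−1, k−b−1) · r^b), where the numerator's sum ranges over all states (X, B) with 1 ∈ B, the denominator's sum ranges over all states, and C(·,·) denotes the binomial coefficient. -/

import Mathlib

/-- The set of states of the circular-warehouse model: pairs `(X, B)` where `X`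
is a k-tuple of positive integers summing to `n` and `B` is a proper subset of
the workers with `X i = 1` for every blocked worker `i ∈ B`. -/
def States (k n : ℕ) : Set ((Fin k → ℕ) × Finset (Fin k)) :=
  {p | (∀ i, 0 < p.1 i) ∧ (∑ i, p.1 i = n) ∧ p.2 ≠ Finset.univ ∧ ∀ i ∈ p.2, p.1 i = 1}

section WarehouseAux
open Finset

lemma weak_card (m N : ℕ) :
    Nat.card {P : Fin m → ℕ // ∑ i, P i = N} = Nat.choose (m + N - 1) N := by
  rw [Nat.card_congr (Sym.equivNatSumOfFintype (Fin m) N).symm, Nat.card_eq_fintype_card]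
  simpa using Sym.card_sym_eq_choose (α := Fin m) N

lemma pos_card (m N : ℕ) (hm : 1 ≤ m) (hmN : m ≤ N) :
    Nat.card {X : Fin m → ℕ // (∀ i, 0 < X i) ∧ ∑ i, X i = N} = Nat.choose (N - 1) (m - 1) := by
  have e : {X : Fin m → ℕ // (∀ i, 0 < X i) ∧ ∑ i, X i = N} ≃
      {P : Fin m → ℕ // ∑ i, P i = N - m} := by
    refine ⟨fun X => ⟨fun i => X.1 i - 1, ?_⟩, fun Y => ⟨fun i => Y.1 i + 1, ?_, ?_⟩, ?_, ?_⟩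
    · obtain ⟨X, hpos, hsum⟩ := X
      have : ∑ i, (X i - 1) = (∑ i, X i) - ∑ i : Fin m, 1 := by
        rw [eq_tsub_iff_add_eq_of_le, ← Finset.sum_add_distrib]
        · exact Finset.sum_congr rfl fun i _ => by have := hpos i; omega
        · apply Finset.sum_le_sum; intro i _; exact hpos i
      simpa [hsum] using this
    · intro i; exact Nat.succ_pos _
    · obtain ⟨Y, hY⟩ := Y
      simp only [Finset.sum_add_distrib, hY, Finset.sum_const, Finset.card_univ,
        Fintype.card_fin, smul_eq_mul, mul_one]
      omega
    · rintro ⟨X, hpos, hsum⟩; ext i; have := hpos i; simp [Fintype.card_fin]; omega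
    · rintro ⟨Y, hY⟩; ext i; simp
  rw [Nat.card_congr e, weak_card]
  rw [show m + (N - m) - 1 = N - 1 by omega, show N - m = (N-1) - (m-1) by omega,
    Nat.choose_symm (by omega)]

lemma countB (k n : ℕ) (hkn : k ≤ n) (B : Finset (Fin k)) (hB : B ≠ Finset.univ) :
    ((Finset.Nat.antidiagonalTuple k n).filter
        (fun X => (∀ i, 0 < X i) ∧ ∀ i ∈ B, X i = 1)).card
      = Nat.choose (n - B.card - 1) (k - B.card - 1) := by
  classical
  set b := B.card with hbdef
  have hbk : b < k := by
    rcases lt_or_eq_of_le (Finset.card_le_univ B) with h | h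
    · simpa using h
    · exact absurd (Finset.eq_univ_of_card B (by simpa using h)) hB
  have hcompl : Bᶜ.card = k - b := by simp [Finset.card_compl, hbdef]
  have e : Fin (k - b) ≃ ↥(Bᶜ : Finset (Fin k)) :=
    (Finset.equivFinOfCardEq hcompl).symm
  have key : {X // X ∈ (Finset.Nat.antidiagonalTuple k n).filter
        (fun X => (∀ i, 0 < X i) ∧ ∀ i ∈ B, X i = 1)} ≃
      {Z : Fin (k - b) → ℕ // (∀ i, 0 < Z i) ∧ ∑ i, Z i = n - b} := by
    refine ⟨fun X => ⟨fun j => X.1 (e j), ?_, ?_⟩,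
      fun Z => ⟨fun i => if h : i ∈ B then 1 else Z.1 (e.symm ⟨i, by simp [h]⟩), ?_⟩, ?_, ?_⟩
    · intro j
      have := (Finset.mem_filter.mp X.2).2.1
      exact this _
    · obtain ⟨X, hX⟩ := X
      rw [Finset.mem_filter, Finset.Nat.mem_antidiagonalTuple] at hX
      obtain ⟨hsum, hpos, hone⟩ := hX
      have h1 : ∑ j, X (e j) = ∑ i ∈ Bᶜ, X i := by
        rw [← Finset.sum_coe_sort Bᶜ X]
        exact Equiv.sum_comp e (fun i : ↥(Bᶜ : Finset (Fin k)) => X i)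
      have h2 : ∑ i ∈ Bᶜ, X i + ∑ i ∈ B, X i = n := by
        rw [Finset.sum_compl_add_sum]; exact hsum
      have h3 : ∑ i ∈ B, X i = b := by
        rw [hbdef, Finset.card_eq_sum_ones]
        exact Finset.sum_congr rfl hone
      show ∑ j : Fin (k - b), X (e j) = n - b
      omega
    · rw [Finset.mem_filter, Finset.Nat.mem_antidiagonalTuple]
      obtain ⟨Z, hpos, hsum⟩ := Z
      refine ⟨?_, fun i => ?_, fun i hi => dif_pos hi⟩
      · rw [← Finset.sum_compl_add_sum B]
        have hB1 : ∑ i ∈ B, (if h : i ∈ B then 1 else Z (e.symm ⟨i, by simp [h]⟩)) = b := by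
          calc ∑ i ∈ B, (if h : i ∈ B then 1 else Z (e.symm ⟨i, by simp [h]⟩))
              = ∑ _i ∈ B, 1 := Finset.sum_congr rfl fun i hi => dif_pos hi
            _ = b := by simp [hbdef]
        have hB2 : ∑ i ∈ Bᶜ, (if h : i ∈ B then 1 else Z (e.symm ⟨i, by simp [h]⟩))
            = n - b := by
          rw [← Finset.sum_attach Bᶜ]
          have : ∀ x : ↥(Bᶜ : Finset (Fin k)),
              (if h : (x : Fin k) ∈ B then 1 else Z (e.symm ⟨(x : Fin k), by simp [h]⟩))
                = Z (e.symm x) := by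
            intro x
            rw [dif_neg (Finset.mem_compl.mp x.2)]
          rw [Finset.sum_congr rfl fun x _ => this x]
          rw [← Finset.univ_eq_attach]
          rw [Equiv.sum_comp e.symm (fun j => Z j)]
          exact hsum
        rw [hB1, hB2]
        omega
      · dsimp only
        split
        · exact Nat.one_pos
        · exact hpos _
    · rintro ⟨X, hX⟩
      rw [Finset.mem_filter] at hX
      ext i
      dsimp only
      by_cases h : i ∈ B
      · rw [dif_pos h]; exact (hX.2.2 i h).symm
      · rw [dif_neg h]
        congr 1
        exact congrArg Subtype.val (e.apply_symm_apply ⟨i, by simp [h]⟩)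
    · rintro ⟨Z, hZ⟩
      ext j
      dsimp only
      rw [dif_neg (Finset.mem_compl.mp (e j).2)]
      congr 1
      rw [Subtype.coe_eta]
      exact e.symm_apply_apply j
  rw [← Nat.card_eq_finsetCard, Nat.card_congr key, pos_card _ _ (by omega) (by omega)]

def StatesF (k n : ℕ) : Finset ((Fin k → ℕ) × Finset (Fin k)) :=
  ((Finset.Nat.antidiagonalTuple k n) ×ˢ Finset.univ).filter
    (fun p => (∀ i, 0 < p.1 i) ∧ p.2 ≠ Finset.univ ∧ ∀ i ∈ p.2, p.1 i = 1)

lemma sum_states (k n : ℕ) (hkn : k ≤ n) (r : ℝ) (Q : Finset (Fin k) → Prop)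
    [DecidablePred Q] :
    ∑ p ∈ (StatesF k n).filter (fun p => Q p.2), r ^ p.2.card
      = ∑ B ∈ Finset.univ.filter (fun B : Finset (Fin k) => B ≠ Finset.univ ∧ Q B),
          (Nat.choose (n - B.card - 1) (k - B.card - 1) : ℝ) * r ^ B.card := by
  classical
  rw [StatesF, Finset.filter_filter, Finset.sum_filter, Finset.sum_product_right]
  rw [Finset.sum_filter]
  refine Finset.sum_congr rfl fun B _ => ?_
  by_cases hq : B ≠ Finset.univ ∧ Q B
  · rw [if_pos hq, ← countB k n hkn B hq.1]
    rw [← Finset.sum_filter]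
    have : Finset.filter
        (fun X => ((∀ i, 0 < X i) ∧ B ≠ Finset.univ ∧ (∀ i ∈ B, X i = 1)) ∧ Q B)
        (Finset.Nat.antidiagonalTuple k n)
        = Finset.filter (fun X => (∀ i, 0 < X i) ∧ ∀ i ∈ B, X i = 1)
          (Finset.Nat.antidiagonalTuple k n) := by
      apply Finset.filter_congr
      intro X _
      simp [hq.1, hq.2]
    rw [this]
    simp [nsmul_eq_mul]
  · rw [if_neg hq]
    apply Finset.sum_eq_zero
    intro X _
    rw [if_neg]
    tauto

lemma card_filter_card_eq (k b : ℕ) :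
    (Finset.univ.filter (fun B : Finset (Fin k) => B.card = b)).card = Nat.choose k b := by
  classical
  rw [← Finset.powerset_univ, ← Finset.powersetCard_eq_filter, Finset.card_powersetCard,
    Finset.card_univ, Fintype.card_fin]

lemma group1 (k : ℕ) (f : ℕ → ℝ) :
    ∑ B ∈ Finset.univ.filter (fun B : Finset (Fin k) => B ≠ Finset.univ), f B.card
      = ∑ b ∈ Finset.range k, (Nat.choose k b : ℝ) * f b := by
  classical
  rw [← Finset.sum_fiberwise_of_maps_to (g := Finset.card) (t := Finset.range k) ?_ _]
  · refine Finset.sum_congr rfl fun b hb => ?_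
    rw [Finset.mem_range] at hb
    have hfib : (Finset.univ.filter (fun B : Finset (Fin k) => B ≠ Finset.univ)).filter
          (fun B => B.card = b)
        = Finset.univ.filter (fun B : Finset (Fin k) => B.card = b) := by
      rw [Finset.filter_filter]
      apply Finset.filter_congr
      intro B _
      constructor
      · exact fun h => h.2
      · intro h
        refine ⟨fun hu => ?_, h⟩
        rw [hu, Finset.card_univ, Fintype.card_fin] at h
        omega
    rw [hfib]
    calc ∑ B ∈ Finset.univ.filter (fun B : Finset (Fin k) => B.card = b), f B.card
        = ∑ _B ∈ Finset.univ.filter (fun B : Finset (Fin k) => B.card = b), f b :=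
          Finset.sum_congr rfl fun B hB => by rw [(Finset.mem_filter.mp hB).2]
      _ = _ := by rw [Finset.sum_const, nsmul_eq_mul, card_filter_card_eq]
  · intro B hB
    rw [Finset.mem_filter] at hB
    rw [Finset.mem_range]
    rcases lt_or_eq_of_le (Finset.card_le_univ B) with h | h
    · simpa using h
    · exact absurd (Finset.eq_univ_of_card B (by simpa using h)) hB.2

lemma card_filter_mem_card (k : ℕ) (i0 : Fin k) (b : ℕ) :
    (Finset.univ.filter (fun B : Finset (Fin k) => i0 ∈ B ∧ B.card = b + 1)).card
      = Nat.choose (k - 1) b := by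
  classical
  rw [show Nat.choose (k-1) b
      = (Finset.powersetCard b (Finset.univ.erase i0)).card by
    rw [Finset.card_powersetCard, Finset.card_erase_of_mem (Finset.mem_univ i0),
      Finset.card_univ, Fintype.card_fin]]
  apply Finset.card_bij (fun B _ => B.erase i0)
  · intro B hB
    rw [Finset.mem_filter] at hB
    rw [Finset.mem_powersetCard]
    exact ⟨Finset.erase_subset_erase i0 (Finset.subset_univ B),
      by rw [Finset.card_erase_of_mem hB.2.1, hB.2.2]; rfl⟩
  · intro B1 hB1 B2 hB2 h
    rw [Finset.mem_filter] at hB1 hB2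
    rw [← Finset.insert_erase hB1.2.1, ← Finset.insert_erase hB2.2.1, h]
  · intro C hC
    rw [Finset.mem_powersetCard] at hC
    have hi0 : i0 ∉ C := fun h => by simpa using hC.1 h
    refine ⟨insert i0 C, ?_, ?_⟩
    · rw [Finset.mem_filter]
      exact ⟨Finset.mem_univ _, Finset.mem_insert_self _ _,
        by rw [Finset.card_insert_of_notMem hi0, hC.2]⟩
    · rw [Finset.erase_insert hi0]

lemma group2 (k : ℕ) (i0 : Fin k) (f : ℕ → ℝ) :
    ∑ B ∈ Finset.univ.filter (fun B : Finset (Fin k) => B ≠ Finset.univ ∧ i0 ∈ B), f B.card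
      = ∑ b ∈ Finset.range (k - 1), (Nat.choose (k - 1) b : ℝ) * f (b + 1) := by
  classical
  have hk1 : 1 ≤ k := i0.pos
  rw [← Finset.sum_fiberwise_of_maps_to (g := fun B => Finset.card B - 1)
      (t := Finset.range (k - 1)) ?_ _]
  · refine Finset.sum_congr rfl fun b hb => ?_
    rw [Finset.mem_range] at hb
    have hfib : (Finset.univ.filter
          (fun B : Finset (Fin k) => B ≠ Finset.univ ∧ i0 ∈ B)).filter
          (fun B => B.card - 1 = b)
        = Finset.univ.filter (fun B : Finset (Fin k) => i0 ∈ B ∧ B.card = b + 1) := by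
      rw [Finset.filter_filter]
      apply Finset.filter_congr
      intro B _
      constructor
      · rintro ⟨⟨_, hmem⟩, hcard⟩
        have : 1 ≤ B.card := Finset.card_pos.mpr ⟨i0, hmem⟩
        exact ⟨hmem, by omega⟩
      · rintro ⟨hmem, hcard⟩
        refine ⟨⟨fun hu => ?_, hmem⟩, by omega⟩
        rw [hu, Finset.card_univ, Fintype.card_fin] at hcard
        omega
    rw [hfib]
    calc ∑ B ∈ Finset.univ.filter
            (fun B : Finset (Fin k) => i0 ∈ B ∧ B.card = b + 1), f B.card
        = ∑ _B ∈ Finset.univ.filter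
            (fun B : Finset (Fin k) => i0 ∈ B ∧ B.card = b + 1), f (b + 1) :=
          Finset.sum_congr rfl fun B hB => by rw [(Finset.mem_filter.mp hB).2.2]
      _ = _ := by rw [Finset.sum_const, nsmul_eq_mul, card_filter_mem_card]
  · intro B hB
    rw [Finset.mem_filter] at hB
    rw [Finset.mem_range]
    have h1 : 1 ≤ B.card := Finset.card_pos.mpr ⟨i0, hB.2.2⟩
    have h2 : B.card < k := by
      rcases lt_or_eq_of_le (Finset.card_le_univ B) with h | h
      · simpa using h
      · exact absurd (Finset.eq_univ_of_card B (by simpa using h)) hB.2.1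
    show B.card - 1 < k - 1
    omega

end WarehouseAux

/-- the stationary probability that worker 1 is blocked, i.e. the
ratio of the total weight `r^{|B|}` of states with `1 ∈ B` to the total weight
of all states, equals
`(Σ_{b=0}^{k-2} C(k-1,b) C(n-b-2,k-b-2) r^{b+1}) / (Σ_{b=0}^{k-1} C(k,b) C(n-b-1,k-b-1) r^b)`. -/
theorem warehouse_blockage_fraction (k n : ℕ) (hk : 2 ≤ k) (hkn : k ≤ n)
    (r : ℝ) (hr : 0 < r) :
    (∑ᶠ p ∈ {p ∈ States k n | (⟨0, by omega⟩ : Fin k) ∈ p.2}, r ^ p.2.card)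
        / (∑ᶠ p ∈ States k n, r ^ p.2.card)
      = (∑ b ∈ Finset.range (k - 1),
            (Nat.choose (k - 1) b : ℝ) * (Nat.choose (n - b - 2) (k - b - 2) : ℝ)
              * r ^ (b + 1))
          / (∑ b ∈ Finset.range k,
              (Nat.choose k b : ℝ) * (Nat.choose (n - b - 1) (k - b - 1) : ℝ) * r ^ b) := by
  classical
  set i0 : Fin k := ⟨0, by omega⟩
  have h1 : States k n = ↑(StatesF k n) := by
    ext p
    simp only [States, StatesF, Set.mem_setOf_eq, Finset.coe_filter, Finset.mem_product,
      Finset.Nat.mem_antidiagonalTuple, Finset.mem_univ, and_true]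
    tauto
  have h2 : {p ∈ States k n | i0 ∈ p.2}
      = ↑((StatesF k n).filter (fun p => i0 ∈ p.2)) := by
    ext p
    simp only [States, StatesF, Set.mem_setOf_eq, Finset.coe_filter, Finset.mem_filter,
      Finset.mem_product, Finset.Nat.mem_antidiagonalTuple, Finset.mem_univ, and_true]
    tauto
  rw [h2, h1, finsum_mem_coe_finset, finsum_mem_coe_finset]
  have hden : ∑ p ∈ StatesF k n, r ^ p.2.card
      = ∑ b ∈ Finset.range k,
          (Nat.choose k b : ℝ) * (Nat.choose (n - b - 1) (k - b - 1) : ℝ) * r ^ b := by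
    rw [show StatesF k n = (StatesF k n).filter (fun p => True) by simp,
      sum_states k n hkn r (fun _ => True)]
    rw [show Finset.univ.filter
          (fun B : Finset (Fin k) => B ≠ Finset.univ ∧ True)
        = Finset.univ.filter (fun B : Finset (Fin k) => B ≠ Finset.univ) by simp]
    rw [group1 k (fun c => (Nat.choose (n - c - 1) (k - c - 1) : ℝ) * r ^ c)]
    exact Finset.sum_congr rfl fun b _ => by ring
  have hnum : ∑ p ∈ (StatesF k n).filter (fun p => i0 ∈ p.2), r ^ p.2.card
      = ∑ b ∈ Finset.range (k - 1),
          (Nat.choose (k - 1) b : ℝ) * (Nat.choose (n - b - 2) (k - b - 2) : ℝ)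
            * r ^ (b + 1) := by
    rw [sum_states k n hkn r (fun B => i0 ∈ B),
      group2 k i0 (fun c => (Nat.choose (n - c - 1) (k - c - 1) : ℝ) * r ^ c)]
    refine Finset.sum_congr rfl fun b _ => ?_
    rw [show n - (b + 1) - 1 = n - b - 2 by omega, show k - (b + 1) - 1 = k - b - 2 by omega]
    ring
  rw [hden, hnum]
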